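/- Let d ≥ 1 and ε ∈ (0,1]. If a nonzero matrix A ∈ ℝ^{d×d} satisfies the Cordes condition with parameter ε, then the normalized matrix γ·A satisfies ‖γ·A‖₂ ≤ 1 + √(1−ε) ≤ 2, where ‖·‖₂ denotes the operator norm induced by the Euclidean norm on ℝ^d. (This is the bound ‖γA‖_{L∞(Ω)} ≤ 1+√(1−ε) ≤ 2 used repeatedly in the proofs of Lemma 3.6 and Theorems 4.1 and 4.2.) -/

import Mathlib

open Matrix

/-- Frobenius inner product of two `d × d` real matrices. -/
noncomputable def frobInner {d : ℕ} (A B : Matrix (Fin d) (Fin d) ℝ) : ℝ :=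
  ∑ i, ∑ j, A i j * B i j

/-- Frobenius norm of a `d × d` real matrix. -/
noncomputable def frobNorm {d : ℕ} (A : Matrix (Fin d) (Fin d) ℝ) : ℝ :=
  Real.sqrt (frobInner A A)

/-- The Cordes condition with parameter `ε`. -/
def CordesCond {d : ℕ} (ε : ℝ) (A : Matrix (Fin d) (Fin d) ℝ) : Prop :=
  ((d : ℝ) - 1 + ε) * frobNorm A ^ 2 ≤ trace A ^ 2

/-- The operator norm of a matrix induced by the Euclidean norm on `ℝ^d`. -/
noncomputable def euclOpNorm {d : ℕ} (A : Matrix (Fin d) (Fin d) ℝ) : ℝ :=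
  ‖LinearMap.toContinuousLinearMap (Matrix.toEuclideanLin A)‖

lemma frobInner_self_nonneg {d : ℕ} (A : Matrix (Fin d) (Fin d) ℝ) : 0 ≤ frobInner A A := by
  apply Finset.sum_nonneg
  intro i _
  exact Finset.sum_nonneg fun j _ => mul_self_nonneg _

lemma euclOpNorm_le_frobNorm {d : ℕ} (A : Matrix (Fin d) (Fin d) ℝ) :
    euclOpNorm A ≤ frobNorm A := by
  apply ContinuousLinearMap.opNorm_le_bound _ (Real.sqrt_nonneg _)
  intro x
  have hx : ‖x‖ = Real.sqrt (∑ j, (x j)^2) := by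
    rw [EuclideanSpace.norm_eq]; simp [Real.norm_eq_abs, sq_abs]
  have happ : ∀ i, (LinearMap.toContinuousLinearMap (Matrix.toEuclideanLin A) x) i
      = ∑ j, A i j * x j := fun i => rfl
  rw [EuclideanSpace.norm_eq]
  simp_rw [happ, Real.norm_eq_abs, sq_abs]
  have key : (∑ i, (∑ j, A i j * x j)^2) ≤ (frobInner A A) * (∑ j, (x j)^2) := by
    rw [frobInner, Finset.sum_mul]
    apply Finset.sum_le_sum
    intro i _
    have := Finset.sum_mul_sq_le_sq_mul_sq Finset.univ (fun j => A i j) (fun j => x j)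
    simpa [pow_two] using this
  calc Real.sqrt (∑ i, (∑ j, A i j * x j)^2)
      ≤ Real.sqrt ((frobInner A A) * (∑ j, (x j)^2)) := Real.sqrt_le_sqrt key
    _ = frobNorm A * ‖x‖ := by
        rw [Real.sqrt_mul (frobInner_self_nonneg A), hx, frobNorm]

lemma frobInner_one_left {d : ℕ} (B : Matrix (Fin d) (Fin d) ℝ) :
    frobInner B 1 = trace B := by
  simp [frobInner, Matrix.one_apply, mul_ite, trace, Matrix.diag]

lemma frobInner_one_one {d : ℕ} : frobInner (1 : Matrix (Fin d) (Fin d) ℝ) 1 = d := by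
  simp [frobInner, Matrix.one_apply, mul_ite]

theorem cordes_opNorm_le {d : ℕ} (hd : 1 ≤ d) {ε : ℝ}
    (hε0 : 0 < ε) (hε1 : ε ≤ 1)
    (A : Matrix (Fin d) (Fin d) ℝ) (hA : A ≠ 0) (hC : CordesCond ε A) :
    euclOpNorm ((trace A / frobNorm A ^ 2) • A) ≤ 1 + Real.sqrt (1 - ε) ∧
      1 + Real.sqrt (1 - ε) ≤ 2 := by
  have h2 : Real.sqrt (1 - ε) ≤ 1 := by
    nlinarith [Real.sq_sqrt (show (0:ℝ) ≤ 1-ε by linarith), Real.sqrt_nonneg (1-ε)]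
  refine ⟨?_, by linarith⟩
  -- positivity of frobInner A A
  have hApos : 0 < frobInner A A := by
    rcases lt_or_eq_of_le (frobInner_self_nonneg A) with h | h
    · exact h
    · exfalso; apply hA
      ext i j
      have hle : A i j * A i j ≤ 0 := by
        by_contra hcon
        push_neg at hcon
        have h1 : (∑ j', A i j' * A i j') > 0 := by
          apply Finset.sum_pos' (fun j' _ => mul_self_nonneg _) ⟨j, Finset.mem_univ j, hcon⟩
        have h2' : (0:ℝ) < frobInner A A := by
          apply Finset.sum_pos' (fun i' _ => Finset.sum_nonneg fun j' _ => mul_self_nonneg _)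
            ⟨i, Finset.mem_univ i, h1⟩
        linarith [h.symm ▸ h2']
      have := mul_self_nonneg (A i j)
      have : A i j * A i j = 0 := le_antisymm hle this
      simpa [Matrix.zero_apply] using mul_self_eq_zero.mp this
  have hfn2 : frobNorm A ^ 2 = frobInner A A := Real.sq_sqrt (frobInner_self_nonneg A)
  set n2 : ℝ := frobInner A A with hn2
  set t : ℝ := trace A with ht
  set γ : ℝ := t / frobNorm A ^ 2 with hγ
  have hγ' : γ = t / n2 := by rw [hγ, hfn2]
  set B : Matrix (Fin d) (Fin d) ℝ := γ • A with hB
  -- frobInner B B and trace B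
  have hBB : frobInner B B = t^2 / n2 := by
    have step : frobInner B B = γ^2 * frobInner A A := by
      simp only [frobInner, hB, Matrix.smul_apply, smul_eq_mul]
      rw [Finset.mul_sum]
      refine Finset.sum_congr rfl fun i _ => ?_
      rw [Finset.mul_sum]
      exact Finset.sum_congr rfl fun j _ => by ring
    rw [step, ← hn2, hγ']
    field_simp
  have htB : trace B = t^2 / n2 := by
    rw [hB, Matrix.trace_smul, hγ', smul_eq_mul, ← ht]
    field_simp
  -- frobInner (B - 1) (B - 1)
  have hexpand : frobInner (B - 1) (B - 1)
      = frobInner B B - 2 * trace B + d := by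
    have : ∀ i j, (B i j - (1 : Matrix (Fin d) (Fin d) ℝ) i j) *
        (B i j - (1 : Matrix (Fin d) (Fin d) ℝ) i j)
        = B i j * B i j - 2 * (B i j * (1 : Matrix (Fin d) (Fin d) ℝ) i j)
          + (1 : Matrix (Fin d) (Fin d) ℝ) i j * (1 : Matrix (Fin d) (Fin d) ℝ) i j :=
      fun i j => by ring
    simp only [frobInner, Matrix.sub_apply] at *
    simp_rw [this, Finset.sum_add_distrib, Finset.sum_sub_distrib, ← Finset.mul_sum]
    have h1 := frobInner_one_left B
    have h2 := frobInner_one_one (d := d)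
    simp only [frobInner] at h1 h2
    rw [h1, h2]
  -- Cordes bound
  have hCordes : ((d : ℝ) - 1 + ε) ≤ t^2 / n2 := by
    have hC' : ((d : ℝ) - 1 + ε) * n2 ≤ t^2 := by
      have := hC
      rw [CordesCond, hfn2] at this
      exact this
    rw [le_div_iff₀ hApos]
    exact hC'
  have hsub : frobInner (B - 1) (B - 1) ≤ 1 - ε := by
    rw [hexpand, hBB, htB]; linarith
  -- final chain
  have htri : euclOpNorm B ≤ euclOpNorm (1 : Matrix (Fin d) (Fin d) ℝ) + euclOpNorm (B - 1) := by
    simp only [euclOpNorm]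
    have hBeq : B = 1 + (B - 1) := by abel
    conv_lhs => rw [hBeq, map_add, map_add]
    exact norm_add_le _ _
  have hone : euclOpNorm (1 : Matrix (Fin d) (Fin d) ℝ) ≤ 1 := by
    rw [euclOpNorm]
    refine ContinuousLinearMap.opNorm_le_bound _ zero_le_one fun x => ?_
    have hx : LinearMap.toContinuousLinearMap
        (Matrix.toEuclideanLin (1 : Matrix (Fin d) (Fin d) ℝ)) x = x := by
      apply (WithLp.equiv 2 (Fin d → ℝ)).injective
      simp [Matrix.toEuclideanLin_apply]
    rw [hx, one_mul]
  have hBm1 : euclOpNorm (B - 1) ≤ Real.sqrt (1 - ε) :=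
    le_trans (euclOpNorm_le_frobNorm _) (Real.sqrt_le_sqrt hsub)
  calc euclOpNorm B ≤ euclOpNorm (1 : Matrix (Fin d) (Fin d) ℝ) + euclOpNorm (B - 1) := htri
    _ ≤ 1 + Real.sqrt (1 - ε) := add_le_add hone hBm1
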